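/- Let l ≤ n/2, let P_i(j) = ∑_{k=0}^i (−1)^{i−k} C(l−k, i−k) C(l−j, k) C(n−l+k−j, k) be the eigenvalues of the Johnson scheme, and set β_i = (i(n+1) − l(l+1))/(l − i + 1) for 0 ≤ i ≤ l. Then ∑_{i=0}^l β_{l−i} P_i(j) ≥ 0 for all 1 ≤ j ≤ l, with equality when j = 0. -/

import Mathlib

open Finset

/-- Eigenvalues of the Johnson scheme. -/
noncomputable def JohnsonP (n l i j : ℕ) : ℝ :=
  ∑ k ∈ Finset.range (i + 1),
    (-1 : ℝ) ^ (i - k) * ((l - k).choose (i - k)) * ((l - j).choose k) *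
      ((n - l + k - j).choose k)

/-- `β_i = (i(n+1) − l(l+1))/(l − i + 1)`. -/
noncomputable def betaCoef (n l i : ℕ) : ℝ :=
  ((i : ℝ) * (n + 1) - l * (l + 1)) / ((l : ℝ) - i + 1)

lemma altChoose (r : ℕ) :
    ∑ m ∈ range (r+1), (-1:ℝ)^m * (r.choose m) = if r = 0 then 1 else 0 := by
  have h := Int.alternating_sum_range_choose (n := r)
  calc ∑ m ∈ range (r+1), (-1:ℝ)^m * (r.choose m)
      = ((∑ m ∈ range (r+1), (-1:ℤ)^m * r.choose m : ℤ) : ℝ) := by push_cast; rfl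
    _ = _ := by rw [h]; split_ifs <;> simp

lemma altInv (r k : ℕ) :
    ∑ m ∈ range (r+1), (-1:ℝ)^m * (r.choose m) / ((k:ℝ)+m+1)
      = (k.factorial : ℝ) * r.factorial / ((k+r+1).factorial) := by
  induction r generalizing k with
  | zero =>
      have h : ((k+1).factorial : ℝ) = ((k:ℝ)+1) * k.factorial := by
        rw [Nat.factorial_succ]; push_cast; ring
      have hk : ((k:ℝ)+1) ≠ 0 := by positivity
      have hf : (k.factorial : ℝ) ≠ 0 := by positivity
      rw [show (0:ℕ)+1 = 1 from rfl, Finset.sum_range_one, h]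
      simp only [pow_zero, Nat.choose_self, Nat.cast_one, Nat.factorial_one, mul_one]
      push_cast
      field_simp
      simp
  | succ r ih =>
      have h3 : ∑ m ∈ range (r+1), (-1:ℝ)^(m+1) * (r.choose (m+1)) / ((k:ℝ)+(m+1)+1)
          = (∑ m ∈ range (r+1), (-1:ℝ)^m * (r.choose m) / ((k:ℝ)+m+1))
            - (-1:ℝ)^0 * (r.choose 0) / ((k:ℝ)+0+1) := by
        rw [Finset.sum_range_succ' (fun m => (-1:ℝ)^m * (r.choose m) / ((k:ℝ)+m+1)) r,
          Finset.sum_range_succ]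
        simp [Nat.choose_succ_self]
      have hsplit : ∀ m ∈ range (r+1),
          (-1:ℝ)^(m+1) * (((r+1).choose (m+1) : ℕ) : ℝ) / ((k:ℝ)+(m+1)+1)
          = (-((-1:ℝ)^m * (r.choose m) / ((k:ℝ)+1+m+1)))
            + (-1:ℝ)^(m+1) * (r.choose (m+1)) / ((k:ℝ)+(m+1)+1) := by
        intro m _
        rw [Nat.choose_succ_succ]
        have hd : ((k:ℝ) + (m+1) + 1) ≠ 0 := by positivity
        have hd2 : ((k:ℝ) + 1 + m + 1) ≠ 0 := by positivity
        push_cast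
        rw [show (k:ℝ)+1+m+1 = (k:ℝ)+(m+1)+1 by ring]
        field_simp
        ring
      have key : ∑ m ∈ range (r+1+1), (-1:ℝ)^m * ((r+1).choose m) / ((k:ℝ)+m+1)
          = (∑ m ∈ range (r+1), (-1:ℝ)^m * (r.choose m) / ((k:ℝ)+m+1))
            - ∑ m ∈ range (r+1), (-1:ℝ)^m * (r.choose m) / ((k:ℝ)+1+m+1) := by
        rw [Finset.sum_range_succ' (fun m => (-1:ℝ)^m * ((r+1).choose m) / ((k:ℝ)+m+1)) (r+1)]
        push_cast
        rw [Finset.sum_congr rfl hsplit, Finset.sum_add_distrib, h3]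
        simp only [Finset.sum_neg_distrib]
        simp [Nat.choose_zero_right]
        ring
      have ih2 : ∑ m ∈ range (r+1), (-1:ℝ)^m * (r.choose m) / ((k:ℝ)+1+m+1)
          = ((k+1).factorial : ℝ) * r.factorial / (((k+1)+r+1).factorial) := by
        have := ih (k+1)
        push_cast at this ⊢
        convert this using 2
      rw [key, ih k, ih2]
      have e1 : (k+1)+r+1 = (k+r+1)+1 := by omega
      have e2 : k+(r+1)+1 = (k+r+1)+1 := by omega
      rw [e1, e2, Nat.factorial_succ (k+r+1), Nat.factorial_succ k, Nat.factorial_succ r]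
      have hp1 : ((k+r+1).factorial : ℝ) ≠ 0 := by positivity
      have hp2 : ((k:ℝ)+(r:ℝ)+1+1) ≠ 0 := by positivity
      push_cast
      field_simp
      ring

noncomputable def Acoef (n l k : ℕ) : ℝ :=
  ∑ m ∈ range (l - k + 1), (-1:ℝ)^m * ((l-k).choose m) * betaCoef n l (l - k - m)

lemma Acoef_eq (n l k : ℕ) (hk : k ≤ l) :
    Acoef n l k = -((n:ℝ)+1) * (if l - k = 0 then 1 else 0)
      + ((l:ℝ)+1)*((n:ℝ)-l+1) * ((k.factorial : ℝ) * (l-k).factorial / ((l+1).factorial)) := by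
  have hcongr : ∀ m ∈ range (l - k + 1),
      (-1:ℝ)^m * ((l-k).choose m) * betaCoef n l (l - k - m)
      = (-1:ℝ)^m * ((l-k).choose m) * (-((n:ℝ)+1))
        + ((l:ℝ)+1)*((n:ℝ)-l+1) * ((-1:ℝ)^m * ((l-k).choose m) / ((k:ℝ)+m+1)) := by
    intro m hm
    rw [Finset.mem_range] at hm
    have hcast : ((l - k - m : ℕ) : ℝ) = (l:ℝ) - k - m := by
      have h : (l - k - m) + (k + m) = l := by omega
      have h2 := congrArg (fun t : ℕ => (t:ℝ)) h
      push_cast at h2; linarith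
    have hd : (l:ℝ) - ((l - k - m : ℕ):ℝ) + 1 = (k:ℝ) + m + 1 := by rw [hcast]; ring
    have hdpos : ((k:ℝ) + m + 1) ≠ 0 := by positivity
    unfold betaCoef
    rw [hd, hcast]
    field_simp
    ring
  unfold Acoef
  rw [Finset.sum_congr rfl hcongr, Finset.sum_add_distrib, ← Finset.sum_mul, ← Finset.mul_sum,
    altChoose, altInv (l-k) k]
  have h : k + (l - k) + 1 = l + 1 := by omega
  rw [h]
  ring

lemma triangle_swap (N : ℕ) (F : ℕ → ℕ → ℝ) :
    ∑ i ∈ range (N+1), ∑ k ∈ range (i+1), F i k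
      = ∑ k ∈ range (N+1), ∑ i ∈ Ico k (N+1), F i k := by
  simp_rw [Finset.range_eq_Ico]
  exact (Finset.sum_Ico_Ico_comm 0 (N+1) fun k i => F i k).symm

lemma swap_eq (n l j : ℕ) :
    ∑ i ∈ range (l + 1), betaCoef n l (l - i) * JohnsonP n l i j
      = ∑ k ∈ range (l + 1), Acoef n l k * ((l-j).choose k) * ((n-l+k-j).choose k) := by
  unfold JohnsonP
  simp only [Finset.mul_sum]
  rw [triangle_swap l (fun i k => betaCoef n l (l - i) *
      ((-1:ℝ)^(i-k) * (((l-k).choose (i-k) : ℕ) : ℝ) * (((l-j).choose k : ℕ) : ℝ) *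
        (((n-l+k-j).choose k : ℕ) : ℝ)))]
  refine Finset.sum_congr rfl ?_
  intro k hk
  rw [Finset.mem_range] at hk
  rw [Finset.sum_Ico_eq_sum_range]
  have hb : l + 1 - k = l - k + 1 := by omega
  rw [hb]
  unfold Acoef
  rw [Finset.sum_mul, Finset.sum_mul]
  refine Finset.sum_congr rfl ?_
  intro m hm
  beta_reduce
  have h1 : k + m - k = m := by omega
  have h2 : l - (k + m) = l - k - m := by omega
  rw [h1, h2]
  ring

theorem johnson_beta_sum_nonneg (n l : ℕ) (hn : 0 < n) (hl : 0 < l) (h2l : 2 * l ≤ n) :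
    (∀ j, 1 ≤ j → j ≤ l →
        0 ≤ ∑ i ∈ Finset.range (l + 1), betaCoef n l (l - i) * JohnsonP n l i j) ∧
      ∑ i ∈ Finset.range (l + 1), betaCoef n l (l - i) * JohnsonP n l i 0 = 0 := by
  have hln : l ≤ n := by omega
  have hnl : (0:ℝ) ≤ (n:ℝ) - l + 1 := by
    have : (l:ℝ) ≤ n := by exact_mod_cast hln
    linarith
  constructor
  · intro j hj1 hjl
    rw [swap_eq n l j]
    apply Finset.sum_nonneg
    intro k hk
    rw [Finset.mem_range] at hk
    rcases eq_or_lt_of_le (Nat.lt_succ_iff.mp hk) with hkl | hkl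
    · have hz : ((l-j).choose k) = 0 := Nat.choose_eq_zero_of_lt (by omega)
      rw [hz]
      simp
    · rw [Acoef_eq n l k (le_of_lt hkl), if_neg (by omega)]
      simp only [mul_zero, zero_add]
      have h1 : (0:ℝ) ≤ ((l:ℝ)+1)*((n:ℝ)-l+1) *
          ((k.factorial : ℝ) * (l-k).factorial / ((l+1).factorial)) := by
        apply mul_nonneg (mul_nonneg (by positivity) hnl) (by positivity)
      have h2 : (0:ℝ) ≤ (((l-j).choose k : ℕ) : ℝ) := by positivity
      have h3 : (0:ℝ) ≤ (((n-l+k-j).choose k : ℕ) : ℝ) := by positivity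
      exact mul_nonneg (mul_nonneg h1 h2) h3
  · rw [swap_eq n l 0]
    simp only [Nat.sub_zero]
    rw [Finset.sum_range_succ]
    have hf : ((l+1).factorial : ℝ) = ((l:ℝ)+1) * l.factorial := by
      rw [Nat.factorial_succ]; push_cast; ring
    have hlf : (l.factorial : ℝ) ≠ 0 := by positivity
    have hl1 : ((l:ℝ)+1) ≠ 0 := by positivity
    have hAl : Acoef n l l * ((l.choose l : ℕ) : ℝ) * (((n-l+l).choose l : ℕ) : ℝ)
        = -(l:ℝ) * ((n.choose l : ℕ) : ℝ) := by
      rw [Acoef_eq n l l le_rfl, if_pos (by omega), Nat.choose_self, Nat.sub_self,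
        Nat.sub_add_cancel hln, hf]
      simp only [Nat.factorial_zero, Nat.cast_one, mul_one]
      field_simp
      ring
    rw [hAl]
    have hmain : ∀ k ∈ range l, Acoef n l k * ((l.choose k : ℕ) : ℝ) * (((n-l+k).choose k : ℕ) : ℝ)
        = ((n:ℝ) - l + 1) * (((n-l+k).choose k : ℕ) : ℝ) := by
      intro k hk
      rw [Finset.mem_range] at hk
      rw [Acoef_eq n l k (le_of_lt hk), if_neg (by omega), hf]
      simp only [mul_zero, zero_add]
      have hfac : ((l.choose k : ℕ) : ℝ) * k.factorial * (l-k).factorial = l.factorial := by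
        exact_mod_cast congrArg (fun t : ℕ => (t:ℝ))
          (Nat.choose_mul_factorial_mul_factorial (le_of_lt hk))
      field_simp
      linear_combination ((n:ℝ)-(l:ℝ)+1) * (((n-l+k).choose k : ℕ) : ℝ) * hfac
    rw [Finset.sum_congr rfl hmain, ← Finset.mul_sum]
    have hock : ∑ k ∈ range l, (n-l+k).choose k = n.choose (l-1) := by
      have h1 : ∀ k ∈ range l, (n-l+k).choose k = (n-l+k).choose (n-l) := by
        intro k _
        have h := Nat.choose_symm (Nat.le_add_left k (n-l))
        rw [Nat.add_sub_cancel] at h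
        exact h.symm
      rw [Finset.sum_congr rfl h1]
      have h2 : ∑ k ∈ range l, (n-l+k).choose (n-l) = ∑ i ∈ Ico (n-l) n, i.choose (n-l) := by
        rw [Finset.sum_Ico_eq_sum_range]
        have : n - (n - l) = l := by omega
        rw [this]
      rw [h2]
      have h3 : Ico (n-l) n = Icc (n-l) (n-1) := by
        rw [← Finset.Ico_add_one_right_eq_Icc]
        congr 1
        omega
      rw [h3, Nat.sum_Icc_choose]
      have h4 : n - 1 + 1 = n := by omega
      rw [h4]
      have h5 := Nat.choose_symm (show n - l + 1 ≤ n by omega)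
      have h6 : n - (n - l + 1) = l - 1 := by omega
      rw [h6] at h5
      exact h5.symm
    have hsum : ∑ k ∈ range l, (((n-l+k).choose k : ℕ) : ℝ) = ((n.choose (l-1) : ℕ) : ℝ) := by
      rw [← hock]; push_cast; rfl
    rw [hsum]
    have hrec := Nat.choose_succ_right_eq n (l-1)
    have hl1' : l - 1 + 1 = l := by omega
    rw [hl1'] at hrec
    have hrec' := congrArg (fun t : ℕ => (t:ℝ)) hrec
    push_cast at hrec'
    have hc1 : ((l - 1 : ℕ) : ℝ) = (l:ℝ) - 1 := by
      have h : (l - 1) + 1 = l := by omega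
      have h2 := congrArg (fun t : ℕ => (t:ℝ)) h
      push_cast at h2; linarith
    have hc2 : ((n - (l-1) : ℕ) : ℝ) = (n:ℝ) - l + 1 := by
      have h : (n - (l-1)) + (l-1) = n := by omega
      have h2 := congrArg (fun t : ℕ => (t:ℝ)) h
      push_cast at h2
      rw [hc1] at h2
      linarith
    rw [hc2] at hrec'
    linarith
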